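/- Let N be a positive integer and let p, q, s be integers with ps − q²N = 1 and s > 0, and set τ = (qN + i√N)/(sN), a point of the upper half plane. Then the matrix γ = (p q; qN s) lies in Γ₀(N) (it has determinant 1 and lower-left entry divisible by N), and γ·W_N fixes τ, where W_N = (0 −1; N 0); explicitly, qN·τ − p = (sN·τ − qN)·τ. Hence every form [sN, −2qN, p] of discriminant −4N with ps − q²N = 1 and s > 0 gives rise to a fixed point of the full Atkin–Lehner involution W_N on X₀(N). -/

import Mathlib

/-- Let `N > 0`, let `p, q, s` be integers with `ps - q²N = 1` and
`s > 0`, and set `τ = (qN + i√N)/(sN)`. Then `τ` lies in the upper half plane, the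
matrix `γ = (p q; qN s)` lies in `Γ₀(N)` (determinant `1`, lower-left entry divisible
by `N`), and `γ·W_N = (qN -p; sN -qN)` fixes `τ`: explicitly `qN·τ - p = (sN·τ - qN)·τ`. -/
theorem form_gives_fixed_point_full_AtkinLehner
    (N : ℕ) (hN : 0 < N) (p q s : ℤ)
    (hdet : p * s - q ^ 2 * (N : ℤ) = 1) (hs : 0 < s)
    (τ : ℂ)
    (hτ : τ = ((q : ℂ) * (N : ℂ) + Complex.I * (Real.sqrt N : ℂ)) / ((s : ℂ) * (N : ℂ))) :
    0 < τ.im ∧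
    p * s - (q * (N : ℤ)) * q = 1 ∧
    (N : ℤ) ∣ (q * (N : ℤ)) ∧
    (q : ℂ) * (N : ℂ) * τ - (p : ℂ) = ((s : ℂ) * (N : ℂ) * τ - (q : ℂ) * (N : ℂ)) * τ := by
  have hNR : (0:ℝ) < (N:ℝ) := by exact_mod_cast hN
  have hsR : (0:ℝ) < (s:ℝ) := by exact_mod_cast hs
  have hsN : ((s:ℂ) * (N:ℂ)) ≠ 0 := by
    have h1 : (s:ℂ) ≠ 0 := by exact_mod_cast hs.ne'
    have h2 : (N:ℂ) ≠ 0 := by exact_mod_cast hN.ne'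
    exact mul_ne_zero h1 h2
  refine ⟨?_, by linear_combination hdet, ⟨q, mul_comm _ _⟩, ?_⟩
  · have : τ.im = Real.sqrt N / ((s:ℝ) * (N:ℝ)) := by
      rw [hτ]
      rw [Complex.div_im]
      simp [Complex.normSq, Complex.mul_im, Complex.mul_re]
      field_simp
    rw [this]
    positivity
  · have hsq : ((Real.sqrt N : ℂ))^2 = (N:ℂ) := by
      norm_cast
      rw [Real.sq_sqrt hNR.le]
    have hdetC : (p:ℂ) * s - q ^ 2 * (N : ℂ) = 1 := by exact_mod_cast hdet
    subst hτ
    have hinv : ((s:ℂ) * (N:ℂ)) * ((s:ℂ) * (N:ℂ))⁻¹ = 1 := mul_inv_cancel₀ hsN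
    linear_combination ((p:ℂ) - ((q:ℂ) * N + Complex.I * (Real.sqrt N : ℂ))^2 * ((s:ℂ) * (N:ℂ))⁻¹) * hinv
      + (-(((s:ℂ) * (N:ℂ))⁻¹ * N)) * hdetC + (-(((s:ℂ) * (N:ℂ))⁻¹ * Complex.I^2)) * hsq
      + (-(((s:ℂ) * (N:ℂ))⁻¹ * N)) * Complex.I_sq
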